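/- Let $N \ge 1$, $\mathcal{I} = \mathbb{Z}/N\mathbb{Z}$, $\Delta t, \Delta x > 0$, $(\mu_i^n)$ non-negative for $n = 1,\dots,K$, and suppose $\Delta t \cdot \max_{1\le n\le K} \max_i [(\Delta_{\mathcal{T}}\mu^n)_i]_+ < 1$ where $(\Delta_{\mathcal{T}}\mu)_i = (\mu_{i+1}-2\mu_i+\mu_{i-1})/\Delta x^2$ and $[x]_+ = \max(x,0)$. If $(z^n)_{0\le n \le K}$ solves $\frac{z_i^n - z_i^{n-1}}{\Delta t} = (\Delta_{\mathcal{T}}(\mu^n z^n))_i$ with $\tilde\gamma \le z_i^0 \le \tilde\Gamma$ for constants $0 \le \tilde\gamma \le \tilde\Gamma$, then for all $n$ and $i$: $\tilde\gamma \prod_{m=1}^n (1 + \Delta t \max_i |[(\Delta_{\mathcal{T}}\mu^m)_i]_-|)^{-1} \le z_i^n \le \tilde\Gamma \prod_{m=1}^n (1 - \Delta t \max_i [(\Delta_{\mathcal{T}}\mu^m)_i]_+)^{-1}$. -/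

import Mathlib

/-- Discrete `L^∞` bounds (maximum principle with growth) for the implicit finite volume
discretization of the Kolmogorov equation `∂ₜ z = Δ(μ z)` on the discrete torus. -/
theorem kolmogorov_Linfty_bounds (N : ℕ) [NeZero N] (Δt Δx : ℝ) (hΔt : 0 < Δt) (hΔx : 0 < Δx)
    (K : ℕ) (μ z : ℕ → ZMod N → ℝ) (hμ : ∀ n i, 0 ≤ μ n i)
    (tγ tΓ : ℝ) (htγ : 0 ≤ tγ) (htγΓ : tγ ≤ tΓ)
    (hz0 : ∀ i, tγ ≤ z 0 i ∧ z 0 i ≤ tΓ)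
    (hscheme : ∀ n ∈ Finset.Icc 1 K, ∀ i : ZMod N,
      (z n i - z (n - 1) i) / Δt
        = (μ n (i + 1) * z n (i + 1) - 2 * (μ n i * z n i) + μ n (i - 1) * z n (i - 1)) / Δx ^ 2)
    (hcfl : ∀ n ∈ Finset.Icc 1 K, ∀ i : ZMod N,
      Δt * max ((μ n (i + 1) - 2 * μ n i + μ n (i - 1)) / Δx ^ 2) 0 < 1) :
    ∀ n ≤ K, ∀ i : ZMod N,
      tγ * ∏ m ∈ Finset.Icc 1 n,
          (1 + Δt * Finset.univ.sup' Finset.univ_nonempty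
            (fun j : ZMod N => max (-((μ m (j + 1) - 2 * μ m j + μ m (j - 1)) / Δx ^ 2)) 0))⁻¹
        ≤ z n i ∧
      z n i ≤ tΓ * ∏ m ∈ Finset.Icc 1 n,
          (1 - Δt * Finset.univ.sup' Finset.univ_nonempty
            (fun j : ZMod N => max ((μ m (j + 1) - 2 * μ m j + μ m (j - 1)) / Δx ^ 2) 0))⁻¹ := by
  have hN : (Finset.univ : Finset (ZMod N)).Nonempty := Finset.univ_nonempty
  set D : ℕ → ZMod N → ℝ :=
    fun m j => (μ m (j + 1) - 2 * μ m j + μ m (j - 1)) / Δx ^ 2 with hDdef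
  set Sp : ℕ → ℝ := fun m => Finset.univ.sup' hN (fun j => max (D m j) 0) with hSpdef
  set Sm : ℕ → ℝ := fun m => Finset.univ.sup' hN (fun j => max (-(D m j)) 0) with hSmdef
  have hSp0 : ∀ m, 0 ≤ Sp m := fun m => by
    simp only [hSpdef]
    exact Finset.le_sup'_of_le _ (Finset.mem_univ (0 : ZMod N)) (le_max_right _ 0)
  have hSm0 : ∀ m, 0 ≤ Sm m := fun m => by
    simp only [hSmdef]
    exact Finset.le_sup'_of_le _ (Finset.mem_univ (0 : ZMod N)) (le_max_right _ 0)
  have hDleSp : ∀ m j, D m j ≤ Sp m := fun m j => by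
    simp only [hSpdef]
    exact Finset.le_sup'_of_le _ (Finset.mem_univ j) (le_max_left _ 0)
  have hnDleSm : ∀ m j, -(D m j) ≤ Sm m := fun m j => by
    simp only [hSmdef]
    exact Finset.le_sup'_of_le _ (Finset.mem_univ j) (le_max_left _ 0)
  have hcfl' : ∀ m ∈ Finset.Icc 1 K, Δt * Sp m < 1 := by
    intro m hm
    have h1 : Sp m < 1 / Δt := by
      simp only [hSpdef]
      refine (Finset.sup'_lt_iff hN).mpr fun j _ => ?_
      rw [lt_div_iff₀ hΔt]
      have h := hcfl m hm j
      simp only [hDdef]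
      linarith
    have := (lt_div_iff₀ hΔt).mp h1
    linarith
  set P : ℕ → ℝ := fun n => ∏ m ∈ Finset.Icc 1 n, (1 - Δt * Sp m)⁻¹ with hPdef
  set Q : ℕ → ℝ := fun n => ∏ m ∈ Finset.Icc 1 n, (1 + Δt * Sm m)⁻¹ with hQdef
  have hQpos : ∀ n, 0 < Q n := by
    intro n
    refine Finset.prod_pos fun m _ => inv_pos.mpr ?_
    nlinarith [hSm0 m, hΔt.le]
  have hPpos : ∀ n, n ≤ K → 0 < P n := by
    intro n hn
    refine Finset.prod_pos fun m hm => inv_pos.mpr ?_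
    have hmK : m ∈ Finset.Icc 1 K := by
      simp only [Finset.mem_Icc] at hm ⊢; exact ⟨hm.1, hm.2.trans hn⟩
    linarith [hcfl' m hmK]
  have main : ∀ n, n ≤ K → ∀ i : ZMod N, tγ * Q n ≤ z n i ∧ z n i ≤ tΓ * P n := by
    intro n
    induction n with
    | zero =>
      intro _ i
      simp only [hPdef, hQdef, Finset.Icc_eq_empty_of_lt Nat.zero_lt_one, Finset.prod_empty,
        mul_one]
      exact hz0 i
    | succ n ih =>
      intro hn1 i
      have hn : n ≤ K := Nat.le_of_succ_le hn1
      have hmem : n + 1 ∈ Finset.Icc 1 K := Finset.mem_Icc.mpr ⟨Nat.succ_le_succ n.zero_le, hn1⟩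
      have hQsucc : Q (n + 1) = Q n * (1 + Δt * Sm (n + 1))⁻¹ :=
        Finset.prod_Icc_succ_top (Nat.succ_le_succ n.zero_le) _
      have hPsucc : P (n + 1) = P n * (1 - Δt * Sp (n + 1))⁻¹ :=
        Finset.prod_Icc_succ_top (Nat.succ_le_succ n.zero_le) _
      have hDx2 : (0:ℝ) < Δx ^ 2 := by positivity
      constructor
      · -- lower bound
        obtain ⟨j, -, hjmin⟩ := Finset.exists_min_image Finset.univ (z (n + 1)) hN
        set b := z (n + 1) j with hb
        have hsch := hscheme (n + 1) hmem j
        rw [Nat.add_sub_cancel] at hsch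
        have hrhs : D (n + 1) j * b ≤
            (μ (n+1) (j + 1) * z (n+1) (j + 1) - 2 * (μ (n+1) j * z (n+1) j)
              + μ (n+1) (j - 1) * z (n+1) (j - 1)) / Δx ^ 2 := by
          simp only [hDdef]
          rw [div_mul_eq_mul_div]
          gcongr
          have h1 : μ (n+1) (j+1) * b ≤ μ (n+1) (j+1) * z (n+1) (j+1) :=
            mul_le_mul_of_nonneg_left (hjmin _ (Finset.mem_univ _)) (hμ _ _)
          have h2 : μ (n+1) (j-1) * b ≤ μ (n+1) (j-1) * z (n+1) (j-1) :=
            mul_le_mul_of_nonneg_left (hjmin _ (Finset.mem_univ _)) (hμ _ _)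
          nlinarith [h1, h2]
        have hkey : Δt * (D (n + 1) j * b) ≤ b - z n j := by
          have h := hrhs.trans_eq hsch.symm
          have h2 := mul_le_mul_of_nonneg_left h hΔt.le
          rw [mul_div_cancel₀ _ hΔt.ne'] at h2
          exact h2
        -- so b * (1 - Δt * D) ≥ z n j ≥ tγ * Q n ≥ 0
        have hihl := (ih hn j).1
        have hQn0 : 0 ≤ tγ * Q n := mul_nonneg htγ (hQpos n).le
        have hbc : tγ * Q n ≤ b * (1 - Δt * D (n + 1) j) := by nlinarith [hkey, hihl]
        have hcpos : 0 < 1 - Δt * D (n + 1) j := by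
          have h := hcfl (n + 1) hmem j
          have h2 : Δt * D (n + 1) j ≤ Δt * max (D (n + 1) j) 0 :=
            mul_le_mul_of_nonneg_left (le_max_left _ 0) hΔt.le
          simp only [hDdef] at h2 ⊢
          linarith
        have hcle : 1 - Δt * D (n + 1) j ≤ 1 + Δt * Sm (n + 1) := by
          have := mul_le_mul_of_nonneg_left (hnDleSm (n + 1) j) hΔt.le
          linarith
        have hb1 : tγ * Q n / (1 + Δt * Sm (n + 1)) ≤ b := by
          rw [div_le_iff₀ (by nlinarith [hSm0 (n+1), hΔt.le])]
          calc tγ * Q n ≤ b * (1 - Δt * D (n + 1) j) := hbc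
            _ ≤ b * (1 + Δt * Sm (n + 1)) := by
                rcases le_or_gt 0 b with hb0 | hb0
                · exact mul_le_mul_of_nonneg_left hcle hb0
                · exfalso; nlinarith [hbc, hQn0]
        calc tγ * Q (n + 1) = tγ * Q n / (1 + Δt * Sm (n + 1)) := by
              rw [hQsucc]; ring
          _ ≤ b := hb1
          _ ≤ z (n + 1) i := hjmin i (Finset.mem_univ i)
      · -- upper bound
        obtain ⟨j, -, hjmax⟩ := Finset.exists_max_image Finset.univ (z (n + 1)) hN
        set a := z (n + 1) j with ha
        have hsch := hscheme (n + 1) hmem j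
        rw [Nat.add_sub_cancel] at hsch
        have hrhs : (μ (n+1) (j + 1) * z (n+1) (j + 1) - 2 * (μ (n+1) j * z (n+1) j)
              + μ (n+1) (j - 1) * z (n+1) (j - 1)) / Δx ^ 2 ≤ D (n + 1) j * a := by
          simp only [hDdef]
          rw [div_mul_eq_mul_div]
          gcongr
          have h1 : μ (n+1) (j+1) * z (n+1) (j+1) ≤ μ (n+1) (j+1) * a :=
            mul_le_mul_of_nonneg_left (hjmax _ (Finset.mem_univ _)) (hμ _ _)
          have h2 : μ (n+1) (j-1) * z (n+1) (j-1) ≤ μ (n+1) (j-1) * a :=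
            mul_le_mul_of_nonneg_left (hjmax _ (Finset.mem_univ _)) (hμ _ _)
          nlinarith [h1, h2]
        have hkey : a - z n j ≤ Δt * (D (n + 1) j * a) := by
          have h := hsch.trans_le hrhs
          have h2 := mul_le_mul_of_nonneg_left h hΔt.le
          rw [mul_div_cancel₀ _ hΔt.ne'] at h2
          exact h2
        have hihu := (ih hn j).2
        have hac : a * (1 - Δt * Sp (n + 1)) ≤ tΓ * P n := by
          rcases le_or_gt 0 a with ha0 | ha0
          · have h1 : Δt * D (n + 1) j ≤ Δt * Sp (n + 1) :=
              mul_le_mul_of_nonneg_left (hDleSp (n + 1) j) hΔt.le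
            nlinarith [hkey, hihu, h1]
          · have : 0 ≤ tΓ * P n := mul_nonneg (htγ.trans htγΓ) (hPpos n hn).le
            nlinarith [hcfl' (n + 1) hmem]
        have hcpos : 0 < 1 - Δt * Sp (n + 1) := by linarith [hcfl' (n + 1) hmem]
        have ha1 : a ≤ tΓ * P n / (1 - Δt * Sp (n + 1)) := by
          rw [le_div_iff₀ hcpos]; exact hac
        calc z (n + 1) i ≤ a := hjmax i (Finset.mem_univ i)
          _ ≤ tΓ * P n / (1 - Δt * Sp (n + 1)) := ha1
          _ = tΓ * P (n + 1) := by rw [hPsucc]; ring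
  exact main
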